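/- Let (V₁, ⟨·,·⟩_h, V₂, B) be a step-two Carnot datum with dim V₁ = m and let g be any inner product on V₂. Then for every (x,t) ∈ V₁ × V₂ with (x,t) ≠ (0,0), | ‖x‖_h²/N_g(x,t)² − (‖x‖_h⁶ + 16‖J^g_t x‖_h²)/N_g(x,t)⁶ | ≤ √m · δ(g). (The quantity (‖x‖_h⁶ + 16‖J^g_t x‖_h²)/N_g⁶ is the squared horizontal gradient ‖∇₀N_g‖_h² of the Kaplan quasinorm on the associated group.) -/

import Mathlib

open scoped RealInnerProductSpace

noncomputable section

variable {V₁ : Type*} [NormedAddCommGroup V₁] [InnerProductSpace ℝ V₁] [FiniteDimensional ℝ V₁]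
variable {V₂ : Type*} [AddCommGroup V₂] [Module ℝ V₂] [FiniteDimensional ℝ V₂]

/-- `g` is an inner product (symmetric positive-definite bilinear form) on `V₂`. -/
structure IsInnerProd (g : V₂ →ₗ[ℝ] V₂ →ₗ[ℝ] ℝ) : Prop where
  symm : ∀ s t : V₂, g s t = g t s
  posdef : ∀ t : V₂, t ≠ 0 → 0 < g t t

/-- The norm `‖t‖_g = √(g t t)` associated to a vertical inner product `g`. -/
def gnorm (g : V₂ →ₗ[ℝ] V₂ →ₗ[ℝ] ℝ) (t : V₂) : ℝ := Real.sqrt (g t t)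

/-- The Hilbert–Schmidt norm `‖F‖_HS = √(trace(F* F))` of an endomorphism of the
inner product space `V₁`. -/
def hsNorm (F : V₁ →ₗ[ℝ] V₁) : ℝ :=
  Real.sqrt (LinearMap.trace ℝ V₁ (LinearMap.adjoint F ∘ₗ F))

/-- `J` is the J-operator of the bracket `B` with respect to the vertical inner product `g`:
`⟨J_T U, V⟩_h = g(B(U,V), T)` for all `U V : V₁`, `T : V₂`. -/
def IsJOp (B : V₁ →ₗ[ℝ] V₁ →ₗ[ℝ] V₂) (g : V₂ →ₗ[ℝ] V₂ →ₗ[ℝ] ℝ)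
    (J : V₂ → V₁ →ₗ[ℝ] V₁) : Prop :=
  ∀ (T : V₂) (U V : V₁), ⟪J T U, V⟫ = g (B U V) T

/-- The H-type deviation relative to a fixed vertical inner product `g` with J-operator `J`:
`δ(g) = (dim V₁)^{-1/2} sup { ‖(J_T)² + id‖_HS : ‖T‖_g = 1 }`. -/
def deltaOf (g : V₂ →ₗ[ℝ] V₂ →ₗ[ℝ] ℝ) (J : V₂ → V₁ →ₗ[ℝ] V₁) : ℝ :=
  (Real.sqrt (Module.finrank ℝ V₁))⁻¹ *
    sSup ((fun T => hsNorm (J T ∘ₗ J T + LinearMap.id)) '' {T : V₂ | gnorm g T = 1})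

/-- The H-type deviation of a step-two Carnot datum: the infimum of `δ(g)` over all vertical
inner products `g` on `V₂`. -/
def htypeDeviation (B : V₁ →ₗ[ℝ] V₁ →ₗ[ℝ] V₂) : ℝ :=
  sInf { d : ℝ | ∃ (g : V₂ →ₗ[ℝ] V₂ →ₗ[ℝ] ℝ) (J : V₂ → V₁ →ₗ[ℝ] V₁),
    IsInnerProd g ∧ IsJOp B g J ∧ d = deltaOf g J }

end

noncomputable section

open scoped RealInnerProductSpace

section AuxLemmas

variable {V₁ : Type*} [NormedAddCommGroup V₁] [InnerProductSpace ℝ V₁] [FiniteDimensional ℝ V₁]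

lemma hsNorm_eq_sum (F : V₁ →ₗ[ℝ] V₁) :
    hsNorm F = Real.sqrt (∑ i, ‖F (stdOrthonormalBasis ℝ V₁ i)‖ ^ 2) := by
  classical
  set e := stdOrthonormalBasis ℝ V₁ with he
  unfold hsNorm
  congr 1
  rw [LinearMap.trace_eq_matrix_trace ℝ e.toBasis, Matrix.trace]
  refine Finset.sum_congr rfl fun i _ => ?_
  rw [Matrix.diag_apply, LinearMap.toMatrix_apply, OrthonormalBasis.coe_toBasis,
    OrthonormalBasis.coe_toBasis_repr_apply, OrthonormalBasis.repr_apply_apply,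
    LinearMap.comp_apply, LinearMap.adjoint_inner_right, real_inner_self_eq_norm_sq]

lemma hsNorm_nonneg (F : V₁ →ₗ[ℝ] V₁) : 0 ≤ hsNorm F := Real.sqrt_nonneg _

lemma norm_apply_le_hsNorm (F : V₁ →ₗ[ℝ] V₁) (x : V₁) : ‖F x‖ ≤ hsNorm F * ‖x‖ := by
  classical
  set e := stdOrthonormalBasis ℝ V₁ with he
  have hx : F x = ∑ i, e.repr x i • F (e i) := by
    conv_lhs => rw [← e.sum_repr x]
    rw [map_sum]
    exact Finset.sum_congr rfl fun i _ => by rw [map_smul]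
  have h1 : ‖F x‖ ≤ ∑ i, |e.repr x i| * ‖F (e i)‖ := by
    rw [hx]
    refine (norm_sum_le _ _).trans (le_of_eq ?_)
    exact Finset.sum_congr rfl fun i _ => by rw [norm_smul, Real.norm_eq_abs]
  have h2 : (∑ i, |e.repr x i| * ‖F (e i)‖) ^ 2
      ≤ (∑ i, |e.repr x i| ^ 2) * (∑ i, ‖F (e i)‖ ^ 2) :=
    Finset.sum_mul_sq_le_sq_mul_sq Finset.univ (fun i => |e.repr x i|) (fun i => ‖F (e i)‖)
  have h3 : (∑ i, |e.repr x i| ^ 2) = ‖x‖ ^ 2 := by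
    rw [← real_inner_self_eq_norm_sq, ← e.sum_inner_mul_inner x x]
    refine Finset.sum_congr rfl fun i _ => ?_
    rw [sq_abs, e.repr_apply_apply, sq, real_inner_comm x (e i)]
  have hnn : 0 ≤ ∑ i, |e.repr x i| * ‖F (e i)‖ :=
    Finset.sum_nonneg fun i _ => mul_nonneg (abs_nonneg _) (norm_nonneg _)
  calc ‖F x‖ ≤ ∑ i, |e.repr x i| * ‖F (e i)‖ := h1
    _ = Real.sqrt ((∑ i, |e.repr x i| * ‖F (e i)‖) ^ 2) := (Real.sqrt_sq hnn).symm
    _ ≤ Real.sqrt ((∑ i, |e.repr x i| ^ 2) * (∑ i, ‖F (e i)‖ ^ 2)) := Real.sqrt_le_sqrt h2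
    _ = Real.sqrt (‖x‖ ^ 2) * Real.sqrt (∑ i, ‖F (e i)‖ ^ 2) := by
        rw [h3, Real.sqrt_mul (sq_nonneg _)]
    _ = hsNorm F * ‖x‖ := by rw [Real.sqrt_sq (norm_nonneg _), hsNorm_eq_sum, mul_comm]

lemma bddAbove_aux {V₂ : Type*} [AddCommGroup V₂] [Module ℝ V₂] [FiniteDimensional ℝ V₂]
    (g : V₂ →ₗ[ℝ] V₂ →ₗ[ℝ] ℝ) (hg : IsInnerProd g) (J : V₂ → V₁ →ₗ[ℝ] V₁)
    (hadd : ∀ s t : V₂, J (s + t) = J s + J t)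
    (hsmul : ∀ (c : ℝ) (s : V₂), J (c • s) = c • J s) :
    BddAbove ((fun T => hsNorm (J T ∘ₗ J T + LinearMap.id)) '' {T : V₂ | gnorm g T = 1}) := by
  classical
  letI cd : InnerProductSpace.Core ℝ V₂ :=
    { inner := fun s t => g s t
      conj_inner_symm := fun x y => by simpa using hg.symm y x
      re_inner_nonneg := fun x => by
        rcases eq_or_ne x 0 with h | h
        · simp [h]
        · simpa using (hg.posdef x h).le
      add_left := fun x y z => by simp
      smul_left := fun x y r => by simp
      definite := fun x hx => by
        by_contra h
        exact absurd hx (hg.posdef x h).ne' }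
  letI : NormedAddCommGroup V₂ := @InnerProductSpace.Core.toNormedAddCommGroup ℝ V₂ _ _ _ cd
  letI : InnerProductSpace ℝ V₂ := InnerProductSpace.ofCore cd.toCore
  have hnorm : ∀ T : V₂, gnorm g T = ‖T‖ := fun T => by
    rw [norm_eq_sqrt_real_inner]; rfl
  set e := stdOrthonormalBasis ℝ V₁ with he
  let Jl : V₂ →ₗ[ℝ] (V₁ →L[ℝ] V₁) :=
    { toFun := fun T => LinearMap.toContinuousLinearMap (J T)
      map_add' := fun s t => by
        show LinearMap.toContinuousLinearMap (J (s + t)) = _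
        rw [hadd]; exact map_add _ _ _
      map_smul' := fun c s => by
        show LinearMap.toContinuousLinearMap (J (c • s))
          = (RingHom.id ℝ) c • LinearMap.toContinuousLinearMap (J s)
        rw [hsmul]; exact map_smul _ _ _ }
  have hJc : Continuous Jl := Jl.continuous_of_finiteDimensional
  have hfcont : Continuous fun T : V₂ =>
      Real.sqrt (∑ i, ‖(Jl T) ((Jl T) (e i)) + e i‖ ^ 2) := by
    refine Real.continuous_sqrt.comp ?_
    refine continuous_finset_sum _ fun i _ => ?_
    exact ((hJc.clm_apply (hJc.clm_apply continuous_const)).add continuous_const).norm.pow 2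
  have hset : {T : V₂ | gnorm g T = 1} = Metric.sphere (0 : V₂) 1 := by
    ext T
    simp only [Set.mem_setOf_eq, mem_sphere_zero_iff_norm, hnorm T]
  have himg : ((fun T => hsNorm (J T ∘ₗ J T + LinearMap.id)) '' {T : V₂ | gnorm g T = 1})
      = (fun T : V₂ => Real.sqrt (∑ i, ‖(Jl T) ((Jl T) (e i)) + e i‖ ^ 2))
        '' (Metric.sphere (0 : V₂) 1) := by
    rw [hset]
    refine Set.image_congr fun T _ => ?_
    rw [hsNorm_eq_sum]
    rfl
  rw [himg]
  exact ((isCompact_sphere (0 : V₂) 1).image hfcont).bddAbove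

end AuxLemmas

/-- Stability estimate for the eikonal identity of the Kaplan quasinorm, in terms of the
H-type deviation: for every `(x,t) ≠ (0,0)`,
`| ‖x‖²/N² − (‖x‖⁶ + 16 ‖J_t x‖²)/N⁶ | ≤ √m · δ(g)`, where
`N = N_g(x,t) = (‖x‖⁴ + 16 ‖t‖_g²)^{1/4}`. -/
theorem eikonal_defect_le_deviation
    {V₁ : Type*} [NormedAddCommGroup V₁] [InnerProductSpace ℝ V₁] [FiniteDimensional ℝ V₁]
    {V₂ : Type*} [AddCommGroup V₂] [Module ℝ V₂] [FiniteDimensional ℝ V₂]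
    (m : ℕ) (hm : 1 ≤ m) (hdim₁ : Module.finrank ℝ V₁ = m)
    (hdim₂ : 1 ≤ Module.finrank ℝ V₂)
    (B : V₁ →ₗ[ℝ] V₁ →ₗ[ℝ] V₂)
    (hAlt : ∀ U : V₁, B U U = 0)
    (hSpan : Submodule.span ℝ {t : V₂ | ∃ U V : V₁, B U V = t} = ⊤)
    (g : V₂ →ₗ[ℝ] V₂ →ₗ[ℝ] ℝ) (hg : IsInnerProd g)
    (J : V₂ → V₁ →ₗ[ℝ] V₁) (hJ : IsJOp B g J)
    (N : V₁ → V₂ → ℝ)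
    (hN : ∀ (x : V₁) (t : V₂), N x t = (‖x‖ ^ 4 + 16 * gnorm g t ^ 2) ^ ((1 : ℝ) / 4)) :
    ∀ (x : V₁) (t : V₂), ¬(x = 0 ∧ t = 0) →
      |‖x‖ ^ 2 / N x t ^ 2 - (‖x‖ ^ 6 + 16 * ‖J t x‖ ^ 2) / N x t ^ 6|
        ≤ Real.sqrt m * deltaOf g J := by
  classical
  -- linearity of J in the vertical variable
  have hadd : ∀ s u : V₂, J (s + u) = J s + J u := by
    intro s u
    ext w
    refine ext_inner_right ℝ fun v => ?_
    rw [hJ, LinearMap.add_apply, inner_add_left, hJ, hJ, map_add]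
  have hsmul : ∀ (c : ℝ) (s : V₂), J (c • s) = c • J s := by
    intro c s
    ext w
    refine ext_inner_right ℝ fun v => ?_
    rw [hJ, LinearMap.smul_apply, real_inner_smul_left, hJ, map_smul, smul_eq_mul]
  have hzero : J 0 = 0 := by
    ext w
    refine ext_inner_right ℝ fun v => ?_
    rw [hJ]
    simp
  -- antisymmetry of B and skewness of J
  have hBanti : ∀ u v : V₁, B u v = - B v u := by
    intro u v
    have h := hAlt (u + v)
    simp only [map_add, LinearMap.add_apply, hAlt, zero_add, add_zero] at h
    exact eq_neg_of_add_eq_zero_right h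
  have hskew : ∀ (s : V₂) (u : V₁), ‖J s u‖ ^ 2 = - ⟪J s (J s u), u⟫ := by
    intro s u
    have h1 : ⟪J s (J s u), u⟫ = g (B (J s u) u) s := hJ s (J s u) u
    have h2 : ⟪J s u, J s u⟫ = g (B u (J s u)) s := hJ s u (J s u)
    rw [← real_inner_self_eq_norm_sq, h2, hBanti u (J s u), map_neg, LinearMap.neg_apply, ← h1]
  -- sup facts
  set S := sSup ((fun T => hsNorm (J T ∘ₗ J T + LinearMap.id)) '' {T : V₂ | gnorm g T = 1})
    with hSdef
  have hBdd := bddAbove_aux g hg J hadd hsmul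
  have hle : ∀ T : V₂, gnorm g T = 1 → hsNorm (J T ∘ₗ J T + LinearMap.id) ≤ S :=
    fun T hT => le_csSup hBdd ⟨T, hT, rfl⟩
  have hgs : ∀ (c : ℝ) (s : V₂), gnorm g (c • s) = |c| * gnorm g s := by
    intro c s
    have h : g (c • s) (c • s) = c ^ 2 * g s s := by
      simp only [map_smul, LinearMap.smul_apply, smul_eq_mul]
      ring
    unfold gnorm
    rw [h, Real.sqrt_mul (sq_nonneg c), Real.sqrt_sq_eq_abs]
  have hnontriv : Nontrivial V₂ := (Module.finrank_pos_iff (R := ℝ)).mp hdim₂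
  obtain ⟨t₀, ht₀⟩ := exists_ne (0 : V₂)
  have hγ₀ : 0 < gnorm g t₀ := Real.sqrt_pos.mpr (hg.posdef t₀ ht₀)
  have hS0 : 0 ≤ S := by
    refine le_trans (hsNorm_nonneg _) (hle ((gnorm g t₀)⁻¹ • t₀) ?_)
    rw [hgs, abs_of_nonneg (inv_nonneg.mpr hγ₀.le), inv_mul_cancel₀ hγ₀.ne']
  intro x t hxt
  -- the key pointwise bound
  have claim : ∀ t' : V₂,
      |gnorm g t' ^ 2 * ‖x‖ ^ 2 - ‖J t' x‖ ^ 2| ≤ gnorm g t' ^ 2 * S * ‖x‖ ^ 2 := by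
    intro t'
    rcases eq_or_ne t' 0 with rfl | ht'
    · have hγz : gnorm g (0 : V₂) = 0 := by simp [gnorm]
      rw [hγz, hzero]
      simp
    · have hγ : 0 < gnorm g t' := Real.sqrt_pos.mpr (hg.posdef t' ht')
      set γ := gnorm g t' with hγdef
      set T := γ⁻¹ • t' with hT
      have hT1 : gnorm g T = 1 := by
        rw [hT, hgs, abs_of_nonneg (inv_nonneg.mpr hγ.le), ← hγdef, inv_mul_cancel₀ hγ.ne']
      have hJt : J t' = γ • J T := by
        rw [hT, hsmul, smul_smul, mul_inv_cancel₀ hγ.ne', one_smul]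
      have h5 : J t' (J t' x) = (γ ^ 2) • (J T (J T x)) := by
        rw [hJt]
        simp only [LinearMap.smul_apply, map_smul, smul_smul]
        rw [sq]
      have hFx : (J T ∘ₗ J T + (LinearMap.id : V₁ →ₗ[ℝ] V₁)) x = J T (J T x) + x := by simp
      have hb1 : |⟪J T (J T x) + x, x⟫| ≤ hsNorm (J T ∘ₗ J T + LinearMap.id) * ‖x‖ ^ 2 := by
        calc |⟪J T (J T x) + x, x⟫| ≤ ‖J T (J T x) + x‖ * ‖x‖ := abs_real_inner_le_norm _ _
          _ ≤ (hsNorm (J T ∘ₗ J T + LinearMap.id) * ‖x‖) * ‖x‖ := by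
              have h := norm_apply_le_hsNorm (J T ∘ₗ J T + LinearMap.id) x
              rw [hFx] at h
              exact mul_le_mul_of_nonneg_right h (norm_nonneg x)
          _ = hsNorm (J T ∘ₗ J T + LinearMap.id) * ‖x‖ ^ 2 := by ring
      have heq : γ ^ 2 * ‖x‖ ^ 2 - ‖J t' x‖ ^ 2 = γ ^ 2 * ⟪J T (J T x) + x, x⟫ := by
        rw [hskew t' x, h5, real_inner_smul_left, inner_add_left, ← real_inner_self_eq_norm_sq]
        ring
      calc |γ ^ 2 * ‖x‖ ^ 2 - ‖J t' x‖ ^ 2| = γ ^ 2 * |⟪J T (J T x) + x, x⟫| := by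
            rw [heq, abs_mul, abs_of_nonneg (sq_nonneg γ)]
        _ ≤ γ ^ 2 * (hsNorm (J T ∘ₗ J T + LinearMap.id) * ‖x‖ ^ 2) :=
            mul_le_mul_of_nonneg_left hb1 (sq_nonneg γ)
        _ ≤ γ ^ 2 * (S * ‖x‖ ^ 2) :=
            mul_le_mul_of_nonneg_left
              (mul_le_mul_of_nonneg_right (hle T hT1) (sq_nonneg ‖x‖)) (sq_nonneg γ)
        _ = γ ^ 2 * S * ‖x‖ ^ 2 := by ring
  -- algebra with the quasinorm
  have hN' := hN x t
  set γ := gnorm g t with hγdef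
  set A := ‖x‖ ^ 4 + 16 * γ ^ 2 with hAdef
  have hA : 0 < A := by
    rcases not_and_or.mp hxt with hx | ht
    · have hxpos : 0 < ‖x‖ := norm_pos_iff.mpr hx
      have : 0 < ‖x‖ ^ 4 := by positivity
      nlinarith [sq_nonneg γ]
    · have hγ : 0 < γ := Real.sqrt_pos.mpr (hg.posdef t ht)
      nlinarith [pow_nonneg (norm_nonneg x) 4]
  have hNpow : ∀ k : ℕ, (N x t) ^ k = A ^ ((k : ℝ) / 4) := by
    intro k
    rw [hN', ← Real.rpow_natCast ((A : ℝ) ^ ((1 : ℝ) / 4)) k, ← Real.rpow_mul hA.le]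
    congr 1
    ring
  have hN4 : (N x t) ^ 4 = A := by
    rw [hNpow 4]
    norm_num
  have hN6pos : 0 < (N x t) ^ 6 := by
    rw [hNpow 6]; exact Real.rpow_pos_of_pos hA _
  have hN2pos : 0 < (N x t) ^ 2 := by
    rw [hNpow 2]; exact Real.rpow_pos_of_pos hA _
  have hsplit : ‖x‖ ^ 2 / (N x t) ^ 2 - (‖x‖ ^ 6 + 16 * ‖J t x‖ ^ 2) / (N x t) ^ 6
      = (16 * (γ ^ 2 * ‖x‖ ^ 2 - ‖J t x‖ ^ 2)) / (N x t) ^ 6 := by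
    have h6 : (N x t) ^ 6 = (N x t) ^ 2 * A := by rw [← hN4]; ring
    have e1 : ‖x‖ ^ 2 / (N x t) ^ 2 = (‖x‖ ^ 2 * A) / ((N x t) ^ 2 * A) :=
      (mul_div_mul_right _ _ hA.ne').symm
    rw [← h6] at e1
    rw [e1, div_sub_div_same]
    congr 1
    rw [hAdef]
    ring
  have hxA : ‖x‖ ^ 2 ≤ Real.sqrt A := by
    rw [Real.le_sqrt (sq_nonneg _) hA.le]
    rw [hAdef]
    nlinarith [sq_nonneg γ]
  have h32 : 16 * γ ^ 2 * ‖x‖ ^ 2 ≤ (N x t) ^ 6 := by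
    have h6 : (N x t) ^ 6 = A * Real.sqrt A := by
      rw [hNpow 6, show (((6 : ℕ) : ℝ)) / 4 = (1 : ℝ) + 1 / 2 by norm_num,
        Real.rpow_add hA, Real.rpow_one, Real.sqrt_eq_rpow]
    have h16 : 16 * γ ^ 2 ≤ A := by rw [hAdef]; nlinarith [pow_nonneg (norm_nonneg x) 4]
    rw [h6]
    exact mul_le_mul h16 hxA (sq_nonneg _) hA.le
  rw [hsplit]
  have habs : |16 * (γ ^ 2 * ‖x‖ ^ 2 - ‖J t x‖ ^ 2) / (N x t) ^ 6|
      = 16 * |γ ^ 2 * ‖x‖ ^ 2 - ‖J t x‖ ^ 2| / (N x t) ^ 6 := by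
    rw [abs_div, abs_of_pos hN6pos, abs_mul]
    norm_num
  rw [habs]
  have hfin : 16 * |γ ^ 2 * ‖x‖ ^ 2 - ‖J t x‖ ^ 2| / (N x t) ^ 6 ≤ S := by
    rw [div_le_iff₀ hN6pos]
    calc 16 * |γ ^ 2 * ‖x‖ ^ 2 - ‖J t x‖ ^ 2| ≤ 16 * (γ ^ 2 * S * ‖x‖ ^ 2) := by
          have := claim t
          rw [← hγdef] at this
          linarith
      _ = S * (16 * γ ^ 2 * ‖x‖ ^ 2) := by ring
      _ ≤ S * (N x t) ^ 6 := mul_le_mul_of_nonneg_left h32 hS0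
      _ = S * (N x t) ^ 6 := rfl
  have hSm : Real.sqrt m * deltaOf g J = S := by
    have hmne : Real.sqrt m ≠ 0 := by
      refine Real.sqrt_ne_zero'.mpr ?_
      exact_mod_cast Nat.pos_of_ne_zero (by omega)
    rw [deltaOf, hdim₁, ← mul_assoc, mul_inv_cancel₀ hmne, one_mul, ← hSdef]
  rw [hSm]
  exact hfin
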